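/- arXiv:2103.14922 — 2 statements merged into one kernel-verified Lean document; each statement's English description precedes it below -/
import Mathlib

section
/- Let λ, μ ∈ ℝ with μ > 0, 3λ + 2μ > 0 (so λ + μ > 0). Fix β ∈ ℂ with β ≠ 0, γ ∈ {1,−1}, ε ∈ {1,−1} with Re(εβ) > 0. Define functions w₁(y) = (1, γεi)ᵀ e^{−εβy} and w₂(y) = [y(1, γεi)ᵀ + (ε(λ+3μ)/(β(λ+μ)), 0)ᵀ] e^{−εβy} on (0,∞). Then w₁ and w₂ both satisfy the ODE system L₀(−γD_y, β)w = 0, where D_y = −i d/dy and L₀(ξ,β) = Aξ² + βBξ + β²C with A = diag(λ+2μ, μ), B = [[0, λ+μ],[λ+μ, 0]], C = diag(μ, λ+2μ). -/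
open Complex Matrix

private lemma hasDerivAt_cexp_mul (c : ℂ) (x : ℝ) :
    HasDerivAt (fun y : ℝ => Complex.exp (c * y)) (c * Complex.exp (c * x)) x := by
  have h : HasDerivAt (fun y : ℝ => c * (y : ℂ)) c x := by
    simpa using (Complex.ofRealCLM.hasDerivAt (x := x)).const_mul c
  simpa [mul_comm] using h.cexp

set_option maxHeartbeats 2000000 in
theorem lamb_stable_solutions_ODE (lam mu : ℝ) (hmu : mu > 0) (hlam : 3 * lam + 2 * mu > 0)
    (β : ℂ) (hβ : β ≠ 0) (γ ε : ℂ) (hγ : γ = 1 ∨ γ = -1) (hε : ε = 1 ∨ ε = -1)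
    (hre : 0 < (ε * β).re) :
    let A : Matrix (Fin 2) (Fin 2) ℂ := !![(lam + 2 * mu : ℂ), 0; 0, (mu : ℂ)]
    let B : Matrix (Fin 2) (Fin 2) ℂ := !![0, (lam + mu : ℂ); (lam + mu : ℂ), 0]
    let C : Matrix (Fin 2) (Fin 2) ℂ := !![(mu : ℂ), 0; 0, (lam + 2 * mu : ℂ)]
    let w₁ : ℝ → (Fin 2 → ℂ) := fun y => Complex.exp (-(ε * β) * y) • ![1, γ * ε * Complex.I]
    let w₂ : ℝ → (Fin 2 → ℂ) := fun y => Complex.exp (-(ε * β) * y) •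
      ((y : ℂ) • ![1, γ * ε * Complex.I] + ![ε * (lam + 3 * mu) / (β * (lam + mu)), 0])
    ∀ y ∈ Set.Ioi (0 : ℝ),
      (-(A.mulVec (deriv (deriv w₁) y)) + (Complex.I * γ * β) • B.mulVec (deriv w₁ y)
          + β ^ 2 • C.mulVec (w₁ y) = 0) ∧
      (-(A.mulVec (deriv (deriv w₂) y)) + (Complex.I * γ * β) • B.mulVec (deriv w₂ y)
          + β ^ 2 • C.mulVec (w₂ y) = 0) := by
  intro A B C w₁ w₂ y hy
  have hlm : ((lam : ℂ) + mu) ≠ 0 := by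
    have h0 : (0 : ℝ) < lam + mu := by linarith
    intro h
    have := congrArg Complex.re h
    simp at this
    linarith
  set c : ℂ := -(ε * β) with hc
  set v : Fin 2 → ℂ := ![1, γ * ε * Complex.I] with hv
  set u : Fin 2 → ℂ := ![ε * (lam + 3 * mu) / (β * (lam + mu)), 0] with hu
  have hexp : ∀ x : ℝ, HasDerivAt (fun y : ℝ => Complex.exp (c * y)) (c * Complex.exp (c * x)) x :=
    fun x => hasDerivAt_cexp_mul c x
  have hW1 : ∀ x : ℝ, HasDerivAt w₁ ((c * Complex.exp (c * x)) • v) x :=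
    fun x => (hexp x).smul_const v
  have hd1 : deriv w₁ = fun x : ℝ => (c * Complex.exp (c * x)) • v :=
    funext fun x => (hW1 x).deriv
  have hd2 : deriv (deriv w₁) = fun x : ℝ => (c * (c * Complex.exp (c * x))) • v := by
    rw [hd1]
    exact funext fun x => (((hexp x).const_mul c).smul_const v).deriv
  have hg : ∀ x : ℝ, HasDerivAt (fun z : ℝ => (z : ℂ) • v + u) v x := by
    intro x
    simpa using ((Complex.ofRealCLM.hasDerivAt (x := x)).smul_const v).add_const u
  have hW2 : ∀ x : ℝ, HasDerivAt w₂
      (Complex.exp (c * x) • v + (c * Complex.exp (c * x)) • ((x : ℂ) • v + u)) x :=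
    fun x => (hexp x).smul (hg x)
  have hd3 : deriv w₂ = fun x : ℝ =>
      Complex.exp (c * x) • v + (c * Complex.exp (c * x)) • ((x : ℂ) • v + u) :=
    funext fun x => (hW2 x).deriv
  have hd4 : deriv (deriv w₂) = fun x : ℝ =>
      (c * Complex.exp (c * x)) • v +
        ((c * Complex.exp (c * x)) • v + (c * (c * Complex.exp (c * x))) • ((x : ℂ) • v + u)) := by
    rw [hd3]
    exact funext fun x =>
      (((hexp x).smul_const v).add (((hexp x).const_mul c).smul (hg x))).deriv
  constructor
  · rw [hd2, hd1]
    show -(A.mulVec ((c * (c * Complex.exp (c * y))) • v))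
        + (Complex.I * γ * β) • B.mulVec ((c * Complex.exp (c * y)) • v)
        + β ^ 2 • C.mulVec (Complex.exp (c * ↑y) • v) = 0
    simp only [A, B, C, hv, hc, Matrix.smul_cons, Matrix.smul_empty, smul_eq_mul,
      Matrix.cons_mulVec, Matrix.cons_dotProduct, Matrix.dotProduct_of_isEmpty, Matrix.empty_mulVec,
      Matrix.neg_cons, Matrix.neg_empty, Matrix.cons_add_cons, Matrix.empty_add_empty,
      Matrix.head_cons, Matrix.tail_cons,
      Matrix.cons_eq_zero_iff, add_zero, mul_zero, zero_mul, mul_one, zero_add, neg_zero]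
    refine ⟨?_, ?_, Subsingleton.elim _ _⟩ <;>
      rcases hγ with rfl | rfl <;> rcases hε with rfl | rfl <;>
        ring_nf <;> simp only [Complex.I_sq] <;> ring_nf
  · rw [hd4, hd3]
    show -(A.mulVec ((c * Complex.exp (c * y)) • v +
          ((c * Complex.exp (c * y)) • v +
            (c * (c * Complex.exp (c * y))) • ((y : ℂ) • v + u))))
        + (Complex.I * γ * β) • B.mulVec
            (Complex.exp (c * y) • v + (c * Complex.exp (c * y)) • ((y : ℂ) • v + u))
        + β ^ 2 • C.mulVec (Complex.exp (c * ↑y) • ((y : ℂ) • v + u)) = 0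
    simp only [A, B, C, hv, hu, hc, Matrix.smul_cons, Matrix.smul_empty, smul_eq_mul,
      Matrix.cons_mulVec, Matrix.cons_dotProduct, Matrix.dotProduct_of_isEmpty, Matrix.empty_mulVec,
      Matrix.neg_cons, Matrix.neg_empty, Matrix.cons_add_cons, Matrix.empty_add_empty,
      Matrix.head_cons, Matrix.tail_cons,
      Matrix.cons_eq_zero_iff, add_zero, mul_zero, zero_mul, mul_one, zero_add, neg_zero]
    refine ⟨?_, ?_, Subsingleton.elim _ _⟩ <;>
      rcases hγ with rfl | rfl <;> rcases hε with rfl | rfl <;>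
        field_simp <;> ring_nf <;> (try simp only [Complex.I_sq]) <;> (try ring_nf)
end

section
/- Let λ, μ ∈ ℝ with μ > 0 and 3λ+2μ > 0, ρ > 0, ω > 0, h > 0, and let a_L, b_L, c_L be the Lamb sesquilinear forms on H¹((−h,h), ℂ²). Suppose there exist C > 0, β₀ > 0 such that for all real a with |a| ≥ β₀ and all v: a_L(v,v) + a b_L(v,v) + a² c_L(v,v) ≥ C(|v|²₁ + a²‖v‖²₀). Then there exist α ∈ (0,1) and C' > 0 such that for all complex β = a + ib with |a| ≥ β₀ and |b| ≤ α|a|, and all v ∈ H¹((−h,h), ℂ²): Re{a_L(v,v) + β b_L(v,v) + β² c_L(v,v)} ≥ C'‖v‖²_{H¹}. -/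
open Complex MeasureTheory intervalIntegral

noncomputable def lambAL (lam mu rho omga h : ℝ) (v₁ v₃ : ℝ → ℂ) : ℂ :=
  ∫ x in (-h)..h,
    (lam + 2 * mu : ℂ) * deriv v₁ x * (starRingEnd ℂ) (deriv v₁ x)
    + (mu : ℂ) * deriv v₃ x * (starRingEnd ℂ) (deriv v₃ x)
    - (omga ^ 2 * rho : ℂ) * (v₁ x * (starRingEnd ℂ) (v₁ x) + v₃ x * (starRingEnd ℂ) (v₃ x))

noncomputable def lambBL (lam mu h : ℝ) (v₁ v₃ : ℝ → ℂ) : ℂ :=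
  ∫ x in (-h)..h,
    (lam : ℂ) * (-Complex.I * deriv v₁ x * (starRingEnd ℂ) (v₃ x)
      + Complex.I * v₃ x * (starRingEnd ℂ) (deriv v₁ x))
    + (mu : ℂ) * (-Complex.I * deriv v₃ x * (starRingEnd ℂ) (v₁ x)
      + Complex.I * v₁ x * (starRingEnd ℂ) (deriv v₃ x))

noncomputable def lambCL (lam mu h : ℝ) (v₁ v₃ : ℝ → ℂ) : ℂ :=
  ∫ x in (-h)..h,
    (lam + 2 * mu : ℂ) * v₃ x * (starRingEnd ℂ) (v₃ x)
    + (mu : ℂ) * v₁ x * (starRingEnd ℂ) (v₁ x)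

noncomputable def lambSemSq (h : ℝ) (v₁ v₃ : ℝ → ℂ) : ℝ :=
  ∫ x in (-h)..h, ‖deriv v₁ x‖ ^ 2 + ‖deriv v₃ x‖ ^ 2

noncomputable def lambL2Sq (h : ℝ) (v₁ v₃ : ℝ → ℂ) : ℝ :=
  ∫ x in (-h)..h, ‖v₁ x‖ ^ 2 + ‖v₃ x‖ ^ 2

/-- H¹-type regularity/integrability hypotheses standing in for `v ∈ H¹((−h,h), ℂ²)`. -/
def lambH1 (h : ℝ) (v₁ v₃ : ℝ → ℂ) : Prop :=
  Differentiable ℝ v₁ ∧ Differentiable ℝ v₃ ∧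
  IntervalIntegrable (fun x => ‖v₁ x‖ ^ 2 + ‖v₃ x‖ ^ 2) volume (-h) h ∧
  IntervalIntegrable (fun x => ‖deriv v₁ x‖ ^ 2 + ‖deriv v₃ x‖ ^ 2) volume (-h) h

lemma myIntervalIntegral_conj (f : ℝ → ℂ) {a b : ℝ} (hab : a ≤ b) :
    (∫ x in a..b, (starRingEnd ℂ) (f x)) = (starRingEnd ℂ) (∫ x in a..b, f x) := by
  rw [intervalIntegral.integral_of_le hab, intervalIntegral.integral_of_le hab,
    integral_conj]

lemma lambAL_im (lam mu rho omga h : ℝ) (hh : 0 < h) (v₁ v₃ : ℝ → ℂ) :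
    (lambAL lam mu rho omga h v₁ v₃).im = 0 := by
  rw [← Complex.conj_eq_iff_im]
  rw [lambAL, ← myIntervalIntegral_conj _ (by linarith : -h ≤ h)]
  congr 1; funext x
  simp only [map_sub, map_add, map_mul, Complex.conj_conj, Complex.conj_ofReal, map_ofNat,
    map_pow]
  ring

lemma lambBL_im (lam mu h : ℝ) (hh : 0 < h) (v₁ v₃ : ℝ → ℂ) :
    (lambBL lam mu h v₁ v₃).im = 0 := by
  rw [← Complex.conj_eq_iff_im]
  rw [lambBL, ← myIntervalIntegral_conj _ (by linarith : -h ≤ h)]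
  congr 1; funext x
  simp only [map_sub, map_add, map_mul, map_neg, Complex.conj_conj, Complex.conj_ofReal,
    Complex.conj_I, map_ofNat, map_pow]
  ring

lemma lambCL_im (lam mu h : ℝ) (hh : 0 < h) (v₁ v₃ : ℝ → ℂ) :
    (lambCL lam mu h v₁ v₃).im = 0 := by
  rw [← Complex.conj_eq_iff_im]
  rw [lambCL, ← myIntervalIntegral_conj _ (by linarith : -h ≤ h)]
  congr 1; funext x
  simp only [map_add, map_mul, Complex.conj_conj, Complex.conj_ofReal, map_ofNat]
  ring

lemma lambCL_re_le (lam mu h : ℝ) (hmu : 0 < mu) (hlam2 : 0 < lam + 2 * mu) (hh : 0 < h)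
    (v₁ v₃ : ℝ → ℂ) (hv : lambH1 h v₁ v₃) :
    (lambCL lam mu h v₁ v₃).re ≤ (lam + 3 * mu) * lambL2Sq h v₁ v₃ := by
  obtain ⟨hd1, hd3, hL2, -⟩ := hv
  have hab : -h ≤ h := by linarith
  have hc1 : Continuous v₁ := hd1.continuous
  have hc3 : Continuous v₃ := hd3.continuous
  have hcont : Continuous (fun x =>
      (lam + 2 * mu : ℂ) * v₃ x * (starRingEnd ℂ) (v₃ x)
      + (mu : ℂ) * v₁ x * (starRingEnd ℂ) (v₁ x)) := by
    exact ((continuous_const.mul hc3).mul hc3.star).add ((continuous_const.mul hc1).mul hc1.star)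
  have hint : IntervalIntegrable (fun x =>
      (lam + 2 * mu : ℂ) * v₃ x * (starRingEnd ℂ) (v₃ x)
      + (mu : ℂ) * v₁ x * (starRingEnd ℂ) (v₁ x)) volume (-h) h :=
    hcont.intervalIntegrable _ _
  have hre : (lambCL lam mu h v₁ v₃).re
      = ∫ x in (-h)..h, (lam + 2 * mu) * ‖v₃ x‖ ^ 2 + mu * ‖v₁ x‖ ^ 2 := by
    have hcc := Complex.reCLM.intervalIntegral_comp_comm hint
    simp only [Complex.reCLM_apply] at hcc
    rw [lambCL, ← hcc]
    congr 1; funext x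
    rw [mul_assoc, mul_assoc, Complex.mul_conj, Complex.mul_conj]
    simp [Complex.normSq_eq_norm_sq, Complex.add_re, Complex.mul_re, ← Complex.ofReal_pow]
  rw [hre, lambL2Sq, ← intervalIntegral.integral_const_mul]
  apply intervalIntegral.integral_mono_on hab
    (((continuous_const.mul (hc3.norm.pow 2)).add
      (continuous_const.mul (hc1.norm.pow 2))).intervalIntegrable _ _)
    (hL2.const_mul _)
  intro x _
  simp only [Pi.add_apply, Pi.mul_apply, Pi.pow_apply]
  nlinarith [sq_nonneg (‖v₁ x‖), sq_nonneg (‖v₃ x‖)]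


set_option maxHeartbeats 1000000 in
theorem lamb_coercivity_complex_beta (lam mu rho omga h : ℝ)
    (hmu : mu > 0) (hlam : 3 * lam + 2 * mu > 0) (hrho : rho > 0) (homga : omga > 0)
    (hh : h > 0) (C β₀ : ℝ) (hC : C > 0) (hβ₀ : β₀ > 0)
    (hcoer : ∀ a : ℝ, β₀ ≤ |a| → ∀ v₁ v₃ : ℝ → ℂ, lambH1 h v₁ v₃ →
      (lambAL lam mu rho omga h v₁ v₃ + (a : ℂ) * lambBL lam mu h v₁ v₃
        + (a : ℂ) ^ 2 * lambCL lam mu h v₁ v₃).re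
        ≥ C * (lambSemSq h v₁ v₃ + a ^ 2 * lambL2Sq h v₁ v₃)) :
    ∃ α : ℝ, 0 < α ∧ α < 1 ∧ ∃ C' > (0 : ℝ), ∀ β : ℂ,
      β₀ ≤ |β.re| → |β.im| ≤ α * |β.re| →
      ∀ v₁ v₃ : ℝ → ℂ, lambH1 h v₁ v₃ →
      (lambAL lam mu rho omga h v₁ v₃ + β * lambBL lam mu h v₁ v₃
        + β ^ 2 * lambCL lam mu h v₁ v₃).re
        ≥ C' * (lambSemSq h v₁ v₃ + lambL2Sq h v₁ v₃) := by
  have hlam2 : 0 < lam + 2 * mu := by linarith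
  set M := lam + 3 * mu with hMdef
  have hM : 0 < M := by rw [hMdef]; linarith
  set α := (1/2) * min 1 (Real.sqrt (C / M)) with hαdef
  have hsq : 0 < Real.sqrt (C / M) := Real.sqrt_pos.mpr (div_pos hC hM)
  have hα_pos : 0 < α := by
    rw [hαdef]
    have := lt_min one_pos hsq
    linarith
  have hα_lt1 : α < 1 := by
    rw [hαdef]
    have := min_le_left 1 (Real.sqrt (C / M))
    linarith
  have hα2M : α ^ 2 * M ≤ C / 4 := by
    have h1 : α ≤ (1/2) * Real.sqrt (C / M) := by
      rw [hαdef]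
      have := min_le_right 1 (Real.sqrt (C / M))
      linarith
    have hs : Real.sqrt (C / M) ^ 2 = C / M := Real.sq_sqrt (div_pos hC hM).le
    have h3 : α ^ 2 ≤ (1/4) * (C / M) := by nlinarith [hα_pos.le]
    have h4 : α ^ 2 * M ≤ (1/4) * (C / M) * M := mul_le_mul_of_nonneg_right h3 hM.le
    calc α ^ 2 * M ≤ (1/4) * (C / M) * M := h4
      _ = C / 4 := by field_simp
  refine ⟨α, hα_pos, hα_lt1, min C (3/4 * C * β₀ ^ 2), lt_min hC (by positivity), ?_⟩
  intro β hrea himb v₁ v₃ hv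
  have hAim := lambAL_im lam mu rho omga h hh v₁ v₃
  have hBim := lambBL_im lam mu h hh v₁ v₃
  have hCim := lambCL_im lam mu h hh v₁ v₃
  have H := hcoer β.re hrea v₁ v₃ hv
  have hCcle := lambCL_re_le lam mu h hmu hlam2 hh v₁ v₃ hv
  have hab : -h ≤ h := by linarith
  have hS : 0 ≤ lambSemSq h v₁ v₃ := by
    rw [lambSemSq]
    exact intervalIntegral.integral_nonneg hab (fun x _ => by positivity)
  have hL : 0 ≤ lambL2Sq h v₁ v₃ := by
    rw [lambL2Sq]
    exact intervalIntegral.integral_nonneg hab (fun x _ => by positivity)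
  set A := lambAL lam mu rho omga h v₁ v₃ with hAdef
  set B := lambBL lam mu h v₁ v₃ with hBdef
  set Cc := lambCL lam mu h v₁ v₃ with hCcdef
  set S := lambSemSq h v₁ v₃ with hSdef
  set L := lambL2Sq h v₁ v₃ with hLdef
  clear_value A B Cc S L
  clear hcoer hv hAdef hBdef hCcdef hSdef hLdef hab
  rw [← hMdef] at hCcle
  clear_value M α
  clear hαdef hMdef hsq
  have key : (A + β * B + β ^ 2 * Cc).re
      = (A + (β.re : ℂ) * B + (β.re : ℂ) ^ 2 * Cc).re - β.im ^ 2 * Cc.re := by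
    simp only [pow_two, Complex.add_re, Complex.mul_re, Complex.mul_im, Complex.ofReal_re,
      Complex.ofReal_im, hAim, hBim, hCim]
    ring
  have hb2 : β.im ^ 2 ≤ α ^ 2 * β.re ^ 2 := by
    nlinarith [_root_.sq_abs β.im, _root_.sq_abs β.re, abs_nonneg β.im, abs_nonneg β.re, hα_pos.le]
  have ha2 : β₀ ^ 2 ≤ β.re ^ 2 := by nlinarith [_root_.sq_abs β.re, abs_nonneg β.re]
  rw [key]
  have hfin1 : β.im ^ 2 * Cc.re ≤ (C / 4) * (β.re ^ 2 * L) := by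
    have t1 : β.im ^ 2 * Cc.re ≤ β.im ^ 2 * (M * L) :=
      mul_le_mul_of_nonneg_left hCcle (sq_nonneg _)
    have t2 : β.im ^ 2 * (M * L) ≤ α ^ 2 * β.re ^ 2 * (M * L) :=
      mul_le_mul_of_nonneg_right hb2 (by positivity)
    have t3 : α ^ 2 * β.re ^ 2 * (M * L) = (α ^ 2 * M) * (β.re ^ 2 * L) := by ring
    have t4 : (α ^ 2 * M) * (β.re ^ 2 * L) ≤ (C / 4) * (β.re ^ 2 * L) :=
      mul_le_mul_of_nonneg_right hα2M (by positivity)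
    exact t1.trans (t2.trans (by rw [t3]; exact t4))
  have hmin1 : min C (3/4 * C * β₀ ^ 2) ≤ C := min_le_left _ _
  have hmin2 : min C (3/4 * C * β₀ ^ 2) ≤ 3/4 * C * β₀ ^ 2 := min_le_right _ _
  have hstep : (3/4 * C * β₀ ^ 2) * L ≤ (3/4 * C) * (β.re ^ 2 * L) := by
    have h6 : β₀ ^ 2 * L ≤ β.re ^ 2 * L := mul_le_mul_of_nonneg_right ha2 hL
    calc (3/4 * C * β₀ ^ 2) * L = (3/4 * C) * (β₀ ^ 2 * L) := by ring
      _ ≤ (3/4 * C) * (β.re ^ 2 * L) := mul_le_mul_of_nonneg_left h6 (by positivity)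
  linarith [mul_le_mul_of_nonneg_right hmin1 hS, mul_le_mul_of_nonneg_right hmin2 hL, H,
    hfin1, hstep, mul_nonneg (mul_nonneg (by norm_num : (0:ℝ) ≤ 3/4) hC.le) (mul_nonneg (sq_nonneg β.re) hL)]
end
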